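/- Let A be a real symmetric n×n matrix and let P and Q be distinct real density matrices such that there is perfect state transfer from P to Q at some time t > 0 (i.e. U(t)·P·U(−t) = Q). Then P is periodic: the set of positive periods of P has a least element σ > 0, and perfect state transfer from P to Q occurs at time σ/2, i.e. U(σ/2)·P·U(−σ/2) = Q. -/

import Mathlib

open Matrix
open scoped ComplexOrder

/-- The transition matrix `U(t) = exp(itA)`. -/
noncomputable def U {n : ℕ} (A : Matrix (Fin n) (Fin n) ℂ) (t : ℝ) :
    Matrix (Fin n) (Fin n) ℂ :=
  NormedSpace.exp (((t : ℂ) * Complex.I) • A)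

lemma U_add {n : ℕ} (A : Matrix (Fin n) (Fin n) ℂ) (s t : ℝ) :
    U A (s + t) = U A s * U A t := by
  unfold U
  rw [← Matrix.exp_add_of_commute]
  · congr 1
    push_cast
    rw [← add_smul, add_mul]
  · exact ((Commute.refl A).smul_left _).smul_right _

lemma U_zero {n : ℕ} (A : Matrix (Fin n) (Fin n) ℂ) : U A 0 = 1 := by
  simp [U, NormedSpace.exp_zero]

lemma U_mul_neg {n : ℕ} (A : Matrix (Fin n) (Fin n) ℂ) (s : ℝ) :
    U A s * U A (-s) = 1 := by
  rw [← U_add, add_neg_cancel, U_zero]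

lemma U_neg_mul {n : ℕ} (A : Matrix (Fin n) (Fin n) ℂ) (s : ℝ) :
    U A (-s) * U A s = 1 := by
  rw [← U_add, neg_add_cancel, U_zero]

lemma U_continuous {n : ℕ} (A : Matrix (Fin n) (Fin n) ℂ) :
    Continuous (fun s : ℝ => U A s) := by
  letI : SeminormedRing (Matrix (Fin n) (Fin n) ℂ) := Matrix.linftyOpSemiNormedRing
  letI : NormedRing (Matrix (Fin n) (Fin n) ℂ) := Matrix.linftyOpNormedRing
  letI : NormedAlgebra ℂ (Matrix (Fin n) (Fin n) ℂ) := Matrix.linftyOpNormedAlgebra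
  letI : NormedAlgebra ℚ (Matrix (Fin n) (Fin n) ℂ) := NormedAlgebra.restrictScalars ℚ ℂ _
  exact NormedSpace.exp_continuous.comp
    (((Complex.continuous_ofReal.mul continuous_const)).smul continuous_const)

/-- The additive subgroup of ℝ consisting of periods of `X` under `U A`. -/
noncomputable def periodGrp {n : ℕ} (A X : Matrix (Fin n) (Fin n) ℂ) : AddSubgroup ℝ where
  carrier := {s : ℝ | U A s * X * U A (-s) = X}
  zero_mem' := by simp [U_zero]
  add_mem' := by
    intro a b ha hb
    have hab : -(a + b) = -b + -a := by ring
    show U A (a + b) * X * U A (-(a + b)) = X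
    rw [hab, U_add, U_add]
    calc U A a * U A b * X * (U A (-b) * U A (-a))
        = U A a * (U A b * X * U A (-b)) * U A (-a) := by noncomm_ring
      _ = X := by rw [hb]; exact ha
  neg_mem' := by
    intro a ha
    show U A (-a) * X * U A (-(-a)) = X
    have := congrArg (fun M => U A (-a) * M * U A a) ha
    rw [neg_neg]
    calc U A (-a) * X * U A a
        = U A (-a) * (U A a * X * U A (-a)) * U A a := by rw [ha]
      _ = (U A (-a) * U A a) * X * (U A (-a) * U A a) := by noncomm_ring
      _ = X := by rw [U_neg_mul]; simp

lemma periodGrp_mem {n : ℕ} {A X : Matrix (Fin n) (Fin n) ℂ} {s : ℝ} :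
    s ∈ periodGrp A X ↔ U A s * X * U A (-s) = X := Iff.rfl

/-- If `A` is real symmetric, `P ≠ Q` are real density matrices,
and there is perfect state transfer from `P` to `Q` at some time `t > 0`, then
the set of positive periods of `P` has a least element `σ`, and perfect state
transfer from `P` to `Q` occurs at time `σ/2`. -/
theorem stmt_10 {n : ℕ} (hn : 1 ≤ n)
    (A : Matrix (Fin n) (Fin n) ℂ)
    (hAreal : ∀ i j, (A i j).im = 0) (hAsym : Aᵀ = A)
    (P Q : Matrix (Fin n) (Fin n) ℂ)
    (hP : P.PosSemidef) (hPtr : P.trace = 1) (hPreal : ∀ i j, (P i j).im = 0)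
    (hQ : Q.PosSemidef) (hQtr : Q.trace = 1) (hQreal : ∀ i j, (Q i j).im = 0)
    (hPQ : P ≠ Q)
    (t : ℝ) (ht : 0 < t) (hpst : U A t * P * U A (-t) = Q) :
    ∃ σ : ℝ, IsLeast {s : ℝ | 0 < s ∧ U A s * P * U A (-s) = P} σ ∧
      U A (σ / 2) * P * U A (-(σ / 2)) = Q := by
  -- transposes
  have hPT : Pᵀ = P := by
    ext i j
    have h1 : Pᴴ = P := hP.isHermitian
    have h2 : (starRingEnd ℂ) (P i j) = P j i := congrFun (congrFun h1 j) i
    have h3 : (starRingEnd ℂ) (P i j) = P i j := Complex.conj_eq_iff_im.2 (hPreal i j)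
    simp only [transpose_apply]
    rw [← h2, h3]
  have hQT : Qᵀ = Q := by
    ext i j
    have h1 : Qᴴ = Q := hQ.isHermitian
    have h2 : (starRingEnd ℂ) (Q i j) = Q j i := congrFun (congrFun h1 j) i
    have h3 : (starRingEnd ℂ) (Q i j) = Q i j := Complex.conj_eq_iff_im.2 (hQreal i j)
    simp only [transpose_apply]
    rw [← h2, h3]
  have hUt : ∀ s : ℝ, (U A s)ᵀ = U A s := by
    intro s
    unfold U
    rw [← Matrix.exp_transpose]
    congr 1
    rw [transpose_smul, hAsym]
  -- reverse transfer: U(-t) P U(t) = Q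
  have hpst' : U A (-t) * P * U A t = Q := by
    have h := congrArg Matrix.transpose hpst
    rw [transpose_mul, transpose_mul, hPT, hUt, hUt, hQT] at h
    rw [← h]
    noncomm_ring
  -- t is not a period
  have ht_not : t ∉ periodGrp A P := by
    intro hmem
    exact hPQ (hpst ▸ (periodGrp_mem.1 hmem).symm ▸ rfl)
  -- 2t is a period
  have h2t : (2 * t) ∈ periodGrp A P := by
    show U A (2 * t) * P * U A (-(2 * t)) = P
    have h1 : (2 : ℝ) * t = t + t := by ring
    rw [h1]
    have h2 : -(t + t) = -t + -t := by ring
    rw [h2, U_add, U_add]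
    calc U A t * U A t * P * (U A (-t) * U A (-t))
        = U A t * (U A t * P * U A (-t)) * U A (-t) := by noncomm_ring
      _ = U A t * Q * U A (-t) := by rw [hpst]
      _ = U A t * (U A (-t) * P * U A t) * U A (-t) := by rw [hpst']
      _ = (U A t * U A (-t)) * P * (U A t * U A (-t)) := by noncomm_ring
      _ = P := by rw [U_mul_neg]; simp
  -- the period set is closed
  have hclosed : IsClosed ((periodGrp A P : Set ℝ)) := by
    have : (periodGrp A P : Set ℝ) = {s : ℝ | U A s * P * U A (-s) = P} := rfl
    rw [this]
    apply isClosed_eq _ continuous_const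
    exact ((U_continuous A).mul continuous_const).mul ((U_continuous A).comp continuous_neg)
  rcases AddSubgroup.dense_or_cyclic (periodGrp A P) with hd | ⟨a, ha⟩
  · exfalso
    have : (periodGrp A P : Set ℝ) = Set.univ := hclosed.closure_eq ▸ hd.closure_eq
    have ht' : t ∈ (periodGrp A P : Set ℝ) := this ▸ Set.mem_univ t
    exact ht_not ht'
  · -- cyclic case
    have hane : a ≠ 0 := by
      rintro rfl
      have := h2t
      rw [ha, AddSubgroup.mem_closure_singleton] at this
      obtain ⟨k, hk⟩ := this
      simp at hk
      linarith
    set σ := |a| with hσdef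
    have hσpos : 0 < σ := abs_pos.2 hane
    have haG : a ∈ periodGrp A P := by rw [ha]; exact AddSubgroup.subset_closure rfl
    have hσG : σ ∈ periodGrp A P := by
      rcases abs_choice a with h | h
      · rwa [hσdef, h]
      · rw [hσdef, h]; exact neg_mem haG
    -- least element
    have hleast : IsLeast {s : ℝ | 0 < s ∧ U A s * P * U A (-s) = P} σ := by
      constructor
      · exact ⟨hσpos, periodGrp_mem.1 hσG⟩
      · rintro s ⟨hs, hsP⟩
        have hsG : s ∈ periodGrp A P := periodGrp_mem.2 hsP
        rw [ha, AddSubgroup.mem_closure_singleton] at hsG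
        obtain ⟨k, hk⟩ := hsG
        have hk0 : k ≠ 0 := by rintro rfl; simp at hk; linarith
        have hs' : s = |(k : ℝ)| * σ := by
          have h5 : |s| = |(k : ℝ)| * |a| := by rw [← hk, zsmul_eq_mul, abs_mul]
          rw [abs_of_pos hs] at h5
          rw [h5, hσdef]
        rw [hs']
        have hk1 : (1 : ℝ) ≤ |(k : ℝ)| := by
          rw [← Int.cast_abs]
          exact_mod_cast Int.one_le_abs hk0
        nlinarith
    refine ⟨σ, hleast, ?_⟩
    -- 2t = m • σ with m odd
    have h2tG := h2t
    rw [ha, AddSubgroup.mem_closure_singleton] at h2tG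
    obtain ⟨k, hk⟩ := h2tG
    -- get m : ℤ with 2t = m * σ
    obtain ⟨m, hm⟩ : ∃ m : ℤ, 2 * t = (m : ℝ) * σ := by
      rcases abs_choice a with h | h
      · exact ⟨k, by rw [hσdef, h, ← hk, zsmul_eq_mul]⟩
      · exact ⟨-k, by rw [hσdef, h, ← hk, zsmul_eq_mul]; push_cast; ring⟩
    -- m is odd
    rcases Int.even_or_odd m with ⟨j, hj⟩ | ⟨j, hj⟩
    · exfalso
      apply ht_not
      have : t = (j : ℝ) * σ := by
        rw [hj] at hm; push_cast at hm; linarith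
      have hmem : (j • σ) ∈ periodGrp A P := zsmul_mem hσG j
      rwa [zsmul_eq_mul, ← this] at hmem
    · -- m = 2j + 1
      have hhalf : σ / 2 = t + -((j : ℝ) * σ) := by
        rw [hj] at hm; push_cast at hm; linarith
      have hhalf' : -(σ / 2) = (j : ℝ) * σ + -t := by
        rw [hj] at hm; push_cast at hm; linarith
      have hmem : (-(j • σ)) ∈ periodGrp A P := neg_mem (zsmul_mem hσG j)
      have hmem' : U A (-((j : ℝ) * σ)) * P * U A ((j : ℝ) * σ) = P := by
        have := periodGrp_mem.1 hmem
        rwa [zsmul_eq_mul, neg_neg] at this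
      rw [hhalf', hhalf, U_add, U_add]
      calc U A t * U A (-((j:ℝ) * σ)) * P * (U A ((j:ℝ) * σ) * U A (-t))
          = U A t * (U A (-((j:ℝ) * σ)) * P * U A ((j:ℝ) * σ)) * U A (-t) := by noncomm_ring
        _ = U A t * P * U A (-t) := by rw [hmem']
        _ = Q := hpst
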